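/- Let d ≥ 2 be an integer, r_a, r_b ∈ ℤ, and let (r_n)_{n≥0} be an eventually periodic sequence of integers. Let (u_n)_{n≥0} and (v_n)_{n≥0} be sequences of positive integers satisfying u_{n+1} = d·u_n + r_b − r_n and v_{n+1} = d·v_n − r_a + r_n for all n, and suppose u_n → ∞. Then limsup_{n→∞} v_n/u_n is a rational number. -/

import Mathlib

open Filter

lemma combine_classes (P n₀ : ℕ) (hP : 0 < P) (Q : ℕ → Prop)
    (h : ∀ j < P, ∀ᶠ m in atTop, Q (n₀ + j + m * P)) : ∀ᶠ n in atTop, Q n := by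
  have h' : ∀ j, ∃ a, ∀ m ≥ a, j < P → Q (n₀ + j + m * P) := by
    intro j
    by_cases hj : j < P
    · obtain ⟨a, ha⟩ := eventually_atTop.1 (h j hj)
      exact ⟨a, fun m hm _ => ha m hm⟩
    · exact ⟨0, fun m _ hj' => absurd hj' hj⟩
  choose M hM using h'
  rw [eventually_atTop]
  refine ⟨n₀ + P * ((Finset.range P).sup M + 1), fun n hn => ?_⟩
  have hn₀ : n₀ ≤ n := le_trans (Nat.le_add_right _ _) hn
  set j := (n - n₀) % P with hj
  set m := (n - n₀) / P with hm
  have hjP : j < P := Nat.mod_lt _ hP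
  have hrepr : n₀ + j + m * P = n := by
    have h0 : j + m * P = n - n₀ := Nat.mod_add_div' _ _
    omega
  have hmM : M j ≤ m := by
    have h1 : P * ((Finset.range P).sup M + 1) ≤ n - n₀ := by omega
    have h2 : (Finset.range P).sup M + 1 ≤ m := by
      rw [hm, Nat.le_div_iff_mul_le hP, mul_comm]
      omega
    have h3 : M j ≤ (Finset.range P).sup M := Finset.le_sup (Finset.mem_range.2 hjP)
    omega
  have := hM j m hmM hjP
  rwa [hrepr] at this

lemma w_formula (d : ℕ) (ra rb : ℤ) (r : ℕ → ℤ) (u v : ℕ → ℕ)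
    (hurec : ∀ n, (u (n + 1) : ℤ) = d * u n + rb - r n)
    (hvrec : ∀ n, (v (n + 1) : ℤ) = d * v n - ra + r n) :
    ∀ n, ((u n : ℤ) + v n) * ((d : ℤ) - 1)
      = (d : ℤ) ^ n * (((u 0 : ℤ) + v 0) * ((d : ℤ) - 1) + (rb - ra)) - (rb - ra) := by
  intro n
  induction n with
  | zero => ring
  | succ n ih =>
    have h1 := hurec n
    have h2 := hvrec n
    linear_combination ((d : ℤ) - 1) * h1 + ((d : ℤ) - 1) * h2 + (d : ℤ) * ih

lemma u_iter (d : ℕ) (rb : ℤ) (r : ℕ → ℤ) (u : ℕ → ℕ)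
    (hurec : ∀ n, (u (n + 1) : ℤ) = d * u n + rb - r n) :
    ∀ m n, (u (n + m) : ℤ)
      = (d : ℤ) ^ m * u n + ∑ i ∈ Finset.range m, (d : ℤ) ^ (m - 1 - i) * (rb - r (n + i)) := by
  intro m
  induction m with
  | zero => simp
  | succ m ih =>
    intro n
    have key : (u (n + (m + 1)) : ℤ) = d * u (n + m) + rb - r (n + m) := by
      rw [show n + (m + 1) = (n + m) + 1 by omega]; exact hurec (n + m)
    rw [key, ih n, Finset.sum_range_succ]
    simp only [Nat.add_sub_cancel]
    have hsum : ∑ i ∈ Finset.range m, (d : ℤ) ^ (m - i) * (rb - r (n + i))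
        = d * ∑ i ∈ Finset.range m, (d : ℤ) ^ (m - 1 - i) * (rb - r (n + i)) := by
      rw [Finset.mul_sum]
      refine Finset.sum_congr rfl fun i hi => ?_
      have hi' := Finset.mem_range.1 hi
      rw [show m - i = (m - 1 - i) + 1 by omega, pow_succ]
      ring
    rw [hsum, Nat.sub_self, pow_zero]
    ring

lemma real_le_of_forall_pos (a b : ℝ) (h : ∀ ε : ℝ, 0 < ε → a ≤ b + ε) : a ≤ b := by
  by_contra h'
  push_neg at h'
  have := h ((a - b) / 2) (by linarith)
  linarith

theorem statement18
    (d : ℕ) (hd : 2 ≤ d) (ra rb : ℤ)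
    (r : ℕ → ℤ)
    (hper : ∃ n₀ P : ℕ, 0 < P ∧ ∀ n ≥ n₀, r (n + P) = r n)
    (u v : ℕ → ℕ) (hu : ∀ n, 0 < u n) (hv : ∀ n, 0 < v n)
    (hurec : ∀ n, (u (n + 1) : ℤ) = d * u n + rb - r n)
    (hvrec : ∀ n, (v (n + 1) : ℤ) = d * v n - ra + r n)
    (hutop : Filter.Tendsto (fun n => (u n : ℝ)) Filter.atTop Filter.atTop) :
    ∃ L : ℚ, Filter.limsup (fun n => (v n : ℝ) / (u n : ℝ)) Filter.atTop = (L : ℝ) := by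
  obtain ⟨n₀, P, hP, hrper⟩ := hper
  -- basic facts
  have hd1 : (1 : ℤ) < (d : ℤ) := by exact_mod_cast (by omega : 1 < d)
  have hdP : (1 : ℤ) < (d : ℤ) ^ P := one_lt_pow₀ hd1 hP.ne'
  have hdR : (1 : ℝ) < (d : ℝ) := by exact_mod_cast (by omega : 1 < d)
  have hdPR : (1 : ℝ) < (d : ℝ) ^ P := one_lt_pow₀ hdR hP.ne'
  have hdPne : ((d : ℝ) ^ P) ≠ 0 := by positivity
  -- the combined sequence w = u + v
  set A : ℤ := ((u 0 : ℤ) + v 0) * ((d : ℤ) - 1) + (rb - ra) with hAdef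
  have hw : ∀ n, ((u n : ℤ) + v n) * ((d : ℤ) - 1) = (d : ℤ) ^ n * A - (rb - ra) := by
    intro n; rw [hAdef]; exact w_formula d ra rb r u v hurec hvrec n
  -- the correction sums
  set S : ℕ → ℤ := fun n => ∑ i ∈ Finset.range P, (d : ℤ) ^ (P - 1 - i) * (rb - r (n + i))
    with hSdef
  have huP : ∀ n, (u (n + P) : ℤ) = (d : ℤ) ^ P * u n + S n := by
    intro n; rw [hSdef]; exact u_iter d rb r u hurec P n
  have hSper : ∀ n, n₀ ≤ n → S (n + P) = S n := by
    intro n hn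
    rw [hSdef]
    refine Finset.sum_congr rfl fun i _ => ?_
    have : r (n + P + i) = r (n + i) := by
      rw [show n + P + i = (n + i) + P by omega]
      exact hrper (n + i) (by omega)
    rw [this]
  have hSper' : ∀ m n, n₀ ≤ n → S (n + m * P) = S n := by
    intro m
    induction m with
    | zero => intro n _; simp
    | succ m ih =>
      intro n hn
      rw [show n + (m + 1) * P = (n + m * P) + P by ring, hSper _ (by omega), ih n hn]
  set B : ℕ → ℤ := fun n => (u n : ℤ) * ((d : ℤ) ^ P - 1) + S n with hBdef
  have huB : ∀ n, n₀ ≤ n → ∀ m,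
      (u (n + m * P) : ℤ) * ((d : ℤ) ^ P - 1) = (d : ℤ) ^ (m * P) * B n - S n := by
    intro n hn m
    induction m with
    | zero => simp only [Nat.zero_mul, Nat.add_zero, pow_zero, one_mul, hBdef]; ring
    | succ m ih =>
      have key : (u (n + m * P + P) : ℤ) = (d : ℤ) ^ P * u (n + m * P) + S n := by
        rw [huP, hSper' m n hn]
      rw [show n + (m + 1) * P = n + m * P + P by ring,
        show (m + 1) * P = m * P + P by ring, pow_add]
      linear_combination ((d : ℤ) ^ P - 1) * key + (d : ℤ) ^ P * ih
  -- positivity of A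
  have hApos : 0 < A := by
    by_contra hA'
    push_neg at hA'
    have hbound : ∀ k, (u k : ℤ) ≤ A - (rb - ra) := by
      intro k
      have h1 : (1 : ℤ) ≤ (d : ℤ) ^ k := one_le_pow₀ hd1.le
      have h2 : (d : ℤ) ^ k * A ≤ 1 * A := mul_le_mul_of_nonpos_right h1 hA'
      have h3 := hw k
      have h4 : (0 : ℤ) ≤ (u k : ℤ) + v k := by positivity
      have h5 : (u k : ℤ) + v k ≤ ((u k : ℤ) + v k) * ((d : ℤ) - 1) :=
        le_mul_of_one_le_right h4 (by omega)
      have h6 : (0 : ℤ) ≤ (v k : ℤ) := by positivity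
      linarith
    obtain ⟨k, hk⟩ := (hutop.eventually_gt_atTop (((A - (rb - ra) : ℤ) : ℝ))).exists
    have := hbound k
    have : ((u k : ℤ) : ℝ) ≤ ((A - (rb - ra) : ℤ) : ℝ) := by exact_mod_cast this
    push_cast at this hk
    linarith
  -- positivity of B n
  have hBpos : ∀ n, n₀ ≤ n → 0 < B n := by
    intro n hn
    by_contra hB'
    push_neg at hB'
    have hbound : ∀ m, (u (n + m * P) : ℤ) ≤ (u n : ℤ) := by
      intro m
      have h1 : (1 : ℤ) ≤ (d : ℤ) ^ (m * P) := one_le_pow₀ hd1.le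
      have h2 : (d : ℤ) ^ (m * P) * B n ≤ 1 * B n := mul_le_mul_of_nonpos_right h1 hB'
      have h3 := huB n hn m
      have h4 := huB n hn 0
      simp at h4
      have h5 : (u (n + m * P) : ℤ) * ((d : ℤ) ^ P - 1) ≤ (u n : ℤ) * ((d : ℤ) ^ P - 1) := by
        have hB0 : B n = (u n : ℤ) * ((d : ℤ) ^ P - 1) + S n := by rw [hBdef]
        linarith
      exact le_of_mul_le_mul_right h5 (by linarith)
    have hφ : Tendsto (fun m => (u (n + m * P) : ℝ)) atTop atTop := by
      apply hutop.comp
      apply tendsto_atTop_mono (f := id) (fun m => ?_) tendsto_id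
      calc (m : ℕ) ≤ m * P := Nat.le_mul_of_pos_right m hP
        _ ≤ n + m * P := Nat.le_add_left _ _
    obtain ⟨m, hm⟩ := (hφ.eventually_gt_atTop ((u n : ℝ))).exists
    have := hbound m
    have : ((u (n + m * P) : ℝ)) ≤ ((u n : ℝ)) := by exact_mod_cast this
    linarith
  -- the limit values
  set L : ℕ → ℚ := fun k =>
      ((d : ℚ) ^ k * (A : ℚ) * ((d : ℚ) ^ P - 1)) / ((B k : ℚ) * ((d : ℚ) - 1)) - 1 with hLdef
  -- convergence along each residue class
  have hlim : ∀ n, n₀ ≤ n →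
      Tendsto (fun m => (v (n + m * P) : ℝ) / (u (n + m * P) : ℝ)) atTop (nhds ((L n : ℝ))) := by
    intro n hn
    set x : ℕ → ℝ := fun m => (((d : ℝ) ^ P)⁻¹) ^ m with hxdef
    have hx0 : Tendsto x atTop (nhds 0) := by
      apply tendsto_pow_atTop_nhds_zero_of_lt_one (by positivity)
      exact inv_lt_one_of_one_lt₀ hdPR
    have hxpos : ∀ m, 0 < x m := fun m => by rw [hxdef]; positivity
    have hx1 : ∀ m, (d : ℝ) ^ (m * P) * x m = 1 := by
      intro m
      simp only [hxdef]
      rw [pow_mul', ← mul_pow, mul_inv_cancel₀ hdPne, one_pow]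
    have hBR : (0 : ℝ) < (B n : ℝ) := by exact_mod_cast hBpos n hn
    have hDne : ((B n : ℝ)) * ((d : ℝ) - 1) ≠ 0 := ne_of_gt (mul_pos hBR (by linarith))
    -- identification of the ratio
    have hF : ∀ m, (v (n + m * P) : ℝ) / (u (n + m * P) : ℝ)
        = ((d : ℝ) ^ n * (A : ℝ) - ((rb : ℝ) - (ra : ℝ)) * x m) * ((d : ℝ) ^ P - 1)
          / (((B n : ℝ) - (S n : ℝ) * x m) * ((d : ℝ) - 1)) - 1 := by
      intro m
      have hu0 : (0 : ℝ) < (u (n + m * P) : ℝ) := by exact_mod_cast hu (n + m * P)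
      have hwZ := hw (n + m * P)
      have hwR : ((u (n + m * P) : ℝ) + (v (n + m * P) : ℝ)) * ((d : ℝ) - 1)
          = (d : ℝ) ^ n * (d : ℝ) ^ (m * P) * (A : ℝ) - ((rb : ℝ) - (ra : ℝ)) := by
        have h' : ((u (n + m * P) : ℝ) + (v (n + m * P) : ℝ)) * ((d : ℝ) - 1)
            = (d : ℝ) ^ (n + m * P) * (A : ℝ) - ((rb : ℝ) - (ra : ℝ)) := by
          exact_mod_cast hwZ
        rw [h', pow_add]
      have huR : (u (n + m * P) : ℝ) * ((d : ℝ) ^ P - 1)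
          = (d : ℝ) ^ (m * P) * (B n : ℝ) - (S n : ℝ) := by exact_mod_cast huB n hn m
      have hk : ((d : ℝ) - 1) * (((d : ℝ) ^ P - 1) * x m) ≠ 0 :=
        ne_of_gt (mul_pos (by linarith) (mul_pos (by linarith) (hxpos m)))
      have hNe : ((d : ℝ) ^ n * (A : ℝ) - ((rb : ℝ) - (ra : ℝ)) * x m) * ((d : ℝ) ^ P - 1)
          = ((u (n + m * P) : ℝ) + (v (n + m * P) : ℝ))
            * (((d : ℝ) - 1) * (((d : ℝ) ^ P - 1) * x m)) := by
        linear_combination (-((d : ℝ) ^ P - 1) * x m) * hwR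
          + (-((d : ℝ) ^ P - 1) * (d : ℝ) ^ n * (A : ℝ)) * hx1 m
      have hDe : ((B n : ℝ) - (S n : ℝ) * x m) * ((d : ℝ) - 1)
          = (u (n + m * P) : ℝ) * (((d : ℝ) - 1) * (((d : ℝ) ^ P - 1) * x m)) := by
        linear_combination (-((d : ℝ) - 1) * x m) * huR + (-((d : ℝ) - 1) * (B n : ℝ)) * hx1 m
      rw [hNe, hDe, mul_div_mul_right _ _ hk]
      field_simp
      ring
    -- the limit
    have hNlim : Tendsto
        (fun m => ((d : ℝ) ^ n * (A : ℝ) - ((rb : ℝ) - (ra : ℝ)) * x m) * ((d : ℝ) ^ P - 1))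
        atTop (nhds ((d : ℝ) ^ n * (A : ℝ) * ((d : ℝ) ^ P - 1))) := by
      have h1 : Tendsto (fun m => (d : ℝ) ^ n * (A : ℝ) - ((rb : ℝ) - (ra : ℝ)) * x m) atTop
          (nhds ((d : ℝ) ^ n * (A : ℝ) - ((rb : ℝ) - (ra : ℝ)) * 0)) :=
        tendsto_const_nhds.sub (tendsto_const_nhds.mul hx0)
      simpa using h1.mul_const _
    have hDlim : Tendsto (fun m => ((B n : ℝ) - (S n : ℝ) * x m) * ((d : ℝ) - 1)) atTop
        (nhds ((B n : ℝ) * ((d : ℝ) - 1))) := by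
      have h1 : Tendsto (fun m => (B n : ℝ) - (S n : ℝ) * x m) atTop
          (nhds ((B n : ℝ) - (S n : ℝ) * 0)) :=
        tendsto_const_nhds.sub (tendsto_const_nhds.mul hx0)
      simpa using h1.mul_const _
    have hdiv := (hNlim.div hDlim hDne).sub_const (1 : ℝ)
    have hLval : ((L n : ℝ))
        = (d : ℝ) ^ n * (A : ℝ) * ((d : ℝ) ^ P - 1) / ((B n : ℝ) * ((d : ℝ) - 1)) - 1 := by
      rw [hLdef]
      push_cast
      ring
    rw [hLval]
    exact Tendsto.congr (fun m => (hF m).symm) hdiv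
  -- the maximum of the limit values
  have hne : (Finset.range P).Nonempty := Finset.nonempty_range_iff.2 hP.ne'
  set M : ℚ := (Finset.range P).sup' hne (fun j => L (n₀ + j)) with hMdef
  refine ⟨M, ?_⟩
  set F : ℕ → ℝ := fun n => (v n : ℝ) / (u n : ℝ) with hFdef
  have hupper : ∀ ε : ℝ, 0 < ε → ∀ᶠ n in atTop, F n ≤ (M : ℝ) + ε := by
    intro ε hε
    apply combine_classes P n₀ hP
    intro j hj
    have h1 := hlim (n₀ + j) (Nat.le_add_right _ _)
    have h2 : ((L (n₀ + j) : ℝ)) < (M : ℝ) + ε := by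
      have h3 : L (n₀ + j) ≤ M := by
        rw [hMdef]; exact Finset.le_sup' (fun j => L (n₀ + j)) (Finset.mem_range.2 hj)
      have h4 : ((L (n₀ + j) : ℝ)) ≤ (M : ℝ) := by exact_mod_cast h3
      linarith
    exact h1.eventually (eventually_le_nhds h2)
  have hlower : ∀ ε : ℝ, 0 < ε → ∃ᶠ n in atTop, (M : ℝ) - ε ≤ F n := by
    intro ε hε
    obtain ⟨j, hj, hjeq⟩ := Finset.exists_mem_eq_sup' hne (fun j => L (n₀ + j))
    have hj' : j < P := Finset.mem_range.1 hj
    have h1 := hlim (n₀ + j) (Nat.le_add_right _ _)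
    have h2 : (M : ℝ) - ε < ((L (n₀ + j) : ℝ)) := by
      have hMj : M = L (n₀ + j) := by rw [hMdef]; exact hjeq
      rw [hMj]
      linarith
    have h3 : ∀ᶠ m in atTop, (M : ℝ) - ε ≤ F (n₀ + j + m * P) :=
      h1.eventually (eventually_ge_nhds h2)
    rw [frequently_atTop]
    intro N
    obtain ⟨a, ha⟩ := eventually_atTop.1 h3
    refine ⟨n₀ + j + (max a N) * P, ?_, ha _ (le_max_left _ _)⟩
    calc N ≤ max a N := le_max_right _ _
      _ ≤ (max a N) * P := Nat.le_mul_of_pos_right _ hP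
      _ ≤ n₀ + j + (max a N) * P := Nat.le_add_left _ _
  have hbdd : IsBoundedUnder (· ≤ ·) atTop F :=
    isBoundedUnder_of_eventually_le (hupper 1 one_pos)
  have hcob : IsCoboundedUnder (· ≤ ·) atTop F :=
    IsCoboundedUnder.of_frequently_ge (hlower 1 one_pos)
  apply le_antisymm
  · apply real_le_of_forall_pos
    intro ε hε
    exact limsup_le_of_le hcob (hupper ε hε)
  · apply real_le_of_forall_pos
    intro ε hε
    have := le_limsup_of_frequently_le (hlower ε hε) hbdd
    linarith
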